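/- The annihilator of R with respect to the pairing B equals the linear span of the six elements y₁⊗y₁, y₃⊗y₃, y₂⊗y₂ − (Qq/[2]_q)y₁⊗y₃, y₁⊗y₂ + q²y₂⊗y₁, y₁⊗y₃ + y₃⊗y₁, y₂⊗y₃ + q²y₃⊗y₂ in W⊗W. That is, {w ∈ W⊗W : B(r, w) = 0 for all r ∈ R} is the span of these six elements. (Quadratic duality: the relations of the quantum exterior algebra Λ_q(𝔲₋) are the orthogonal complement of the relations of S_q(𝔲₊).) -/

import Mathlib

noncomputable section

open scoped TensorProduct RealInnerProductSpace

/-- The quantum integer `[n]_q = (q^n - q^(-n))/(q - q⁻¹)`. -/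
def qnum (q : ℝ) (n : ℤ) : ℝ := (q ^ n - q ^ (-n)) / (q - q⁻¹)

/-- quadratic duality. The annihilator of the relations `R` of
`S_q(𝔲₊)` with respect to the pairing `B` is the span of the six relations of the
quantum exterior algebra `Λ_q(𝔲₋)`. -/
theorem quadratic_duality (q : ℝ) (hq0 : 0 < q) (hq1 : q < 1)
    {V W : Type} [AddCommGroup V] [Module ℝ V] [AddCommGroup W] [Module ℝ W]
    (x : Module.Basis (Fin 3) ℝ V) (y : Module.Basis (Fin 3) ℝ W)
    (B : V ⊗[ℝ] V →ₗ[ℝ] W ⊗[ℝ] W →ₗ[ℝ] ℝ)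
    (hB : ∀ i j k l : Fin 3,
      B (x i ⊗ₜ[ℝ] x j) (y k ⊗ₜ[ℝ] y l) = if i = l ∧ j = k then 1 else 0) :
    {w : W ⊗[ℝ] W |
        ∀ r ∈ Submodule.span ℝ ({x 0 ⊗ₜ[ℝ] x 1 - (q ^ (2 : ℤ)) • (x 1 ⊗ₜ[ℝ] x 0),
          x 1 ⊗ₜ[ℝ] x 2 - (q ^ (2 : ℤ)) • (x 2 ⊗ₜ[ℝ] x 1),
          x 0 ⊗ₜ[ℝ] x 2 - x 2 ⊗ₜ[ℝ] x 0
            - ((q - q⁻¹) * q / (q + q⁻¹)) • (x 1 ⊗ₜ[ℝ] x 1)} : Set (V ⊗[ℝ] V)),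
          B r w = 0}
      = ↑(Submodule.span ℝ ({y 0 ⊗ₜ[ℝ] y 0, y 2 ⊗ₜ[ℝ] y 2,
          y 1 ⊗ₜ[ℝ] y 1 - ((q - q⁻¹) * q / (q + q⁻¹)) • (y 0 ⊗ₜ[ℝ] y 2),
          y 0 ⊗ₜ[ℝ] y 1 + (q ^ (2 : ℤ)) • (y 1 ⊗ₜ[ℝ] y 0),
          y 0 ⊗ₜ[ℝ] y 2 + y 2 ⊗ₜ[ℝ] y 0,
          y 1 ⊗ₜ[ℝ] y 2 + (q ^ (2 : ℤ)) • (y 2 ⊗ₜ[ℝ] y 1)} : Set (W ⊗[ℝ] W))) := by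
  ext w
  simp only [Set.mem_setOf_eq, SetLike.mem_coe]
  constructor
  · intro h
    set b := Module.Basis.tensorProduct y y with hb
    set c := b.repr w with hc
    have hw : w = ∑ p : Fin 3 × Fin 3, c p • (y p.1 ⊗ₜ[ℝ] y p.2) := by
      conv_lhs => rw [← b.sum_repr w]
      refine Finset.sum_congr rfl fun p _ => ?_
      rw [hb, Module.Basis.tensorProduct_apply']
    have key : ∀ i j : Fin 3, B (x i ⊗ₜ[ℝ] x j) w = c (j, i) := by
      intro i j
      rw [hw, map_sum]
      simp only [map_smul, hB, smul_eq_mul, mul_ite, mul_one, mul_zero]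
      have step : ∀ p : Fin 3 × Fin 3,
          (if i = p.2 ∧ j = p.1 then c p else 0) = if (j, i) = p then c p else 0 := by
        intro p; congr 1
        simp only [Prod.ext_iff, eq_iff_iff]
        tauto
      rw [Finset.sum_congr rfl fun p _ => step p, Finset.sum_ite_eq]
      simp
    have h1 := h (x 0 ⊗ₜ[ℝ] x 1 - (q ^ (2 : ℤ)) • (x 1 ⊗ₜ[ℝ] x 0))
      (Submodule.subset_span (by simp))
    have h2 := h (x 1 ⊗ₜ[ℝ] x 2 - (q ^ (2 : ℤ)) • (x 2 ⊗ₜ[ℝ] x 1))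
      (Submodule.subset_span (by simp))
    have h3 := h (x 0 ⊗ₜ[ℝ] x 2 - x 2 ⊗ₜ[ℝ] x 0
        - ((q - q⁻¹) * q / (q + q⁻¹)) • (x 1 ⊗ₜ[ℝ] x 1))
      (Submodule.subset_span (by simp))
    rw [map_sub, map_smul, LinearMap.sub_apply, LinearMap.smul_apply, key, key,
      smul_eq_mul] at h1 h2
    rw [map_sub, map_sub, map_smul, LinearMap.sub_apply, LinearMap.sub_apply,
      LinearMap.smul_apply, key, key, key, smul_eq_mul] at h3
    have hwrep : w = c (0,0) • (y 0 ⊗ₜ[ℝ] y 0) + c (2,2) • (y 2 ⊗ₜ[ℝ] y 2)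
        + c (1,1) • (y 1 ⊗ₜ[ℝ] y 1 - ((q - q⁻¹) * q / (q + q⁻¹)) • (y 0 ⊗ₜ[ℝ] y 2))
        + c (0,1) • (y 0 ⊗ₜ[ℝ] y 1 + (q ^ (2 : ℤ)) • (y 1 ⊗ₜ[ℝ] y 0))
        + c (2,0) • (y 0 ⊗ₜ[ℝ] y 2 + y 2 ⊗ₜ[ℝ] y 0)
        + c (1,2) • (y 1 ⊗ₜ[ℝ] y 2 + (q ^ (2 : ℤ)) • (y 2 ⊗ₜ[ℝ] y 1)) := by
      rw [hw, Fintype.sum_prod_type]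
      rw [Fin.sum_univ_three]
      simp only [Fin.sum_univ_three]
      match_scalars
      · ring
      · ring
      · linarith [h3]
      · linarith [h1]
      · ring
      · linarith [h2]
      · ring
      · linarith [h2]
      · ring
    rw [hwrep]
    apply Submodule.add_mem
    apply Submodule.add_mem
    apply Submodule.add_mem
    apply Submodule.add_mem
    apply Submodule.add_mem
    all_goals exact Submodule.smul_mem _ _ (Submodule.subset_span (by simp))
  · intro hw r hr
    induction hr using Submodule.span_induction with
    | mem r hr =>
      induction hw using Submodule.span_induction with
      | mem u hu =>
        simp only [Set.mem_insert_iff, Set.mem_singleton_iff] at hr hu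
        rcases hr with rfl | rfl | rfl <;> rcases hu with rfl | rfl | rfl | rfl | rfl | rfl <;>
          simp [hB, map_sub, map_add, map_smul, LinearMap.sub_apply, LinearMap.smul_apply,
            smul_eq_mul, Fin.ext_iff] <;> ring
      | zero => simp
      | add u v _ _ hu hv => simp [map_add, hu, hv]
      | smul t u _ hu => simp [map_smul, hu]
    | zero => simp
    | add u v _ _ hu hv => simp [map_add, LinearMap.add_apply, hu, hv]
    | smul t u _ hu => simp [map_smul, LinearMap.smul_apply, hu]
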